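/- For all s ∈ ℝ and t > 0, (L̂_d Ê)(s,t) = Ê(s,t)/(2t). -/

import Mathlib

/-- The complementary error function `erfc z = (2/√π) ∫_z^∞ e^{-u²} du`. -/
noncomputable def erfc (z : ℝ) : ℝ :=
  (2 / Real.sqrt Real.pi) * ∫ u in Set.Ioi z, Real.exp (-u ^ 2)

/-- `ψ̂₀(s,t) = erfc((d(t)-s)/(2√(εt)))`. -/
noncomputable def psi0 (ε : ℝ) (d : ℝ → ℝ) (s t : ℝ) : ℝ :=
  erfc ((d t - s) / (2 * Real.sqrt (ε * t)))

/-- `Ê(s,t) = exp(-(s-d(t))²/(4εt))`. -/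
noncomputable def Ehat (ε : ℝ) (d : ℝ → ℝ) (s t : ℝ) : ℝ :=
  Real.exp (-(s - d t) ^ 2 / (4 * ε * t))

/-- The operator `L̂_d F = -ε F_ss + â(d(t),t) F_s + F_t`. -/
noncomputable def Ld (ε : ℝ) (a : ℝ → ℝ → ℝ) (d : ℝ → ℝ) (F : ℝ → ℝ → ℝ) (s t : ℝ) : ℝ :=
  -ε * iteratedDeriv 2 (fun x => F x t) s
    + a (d t) t * deriv (fun x => F x t) s
    + deriv (fun τ => F s τ) t

/-- For all `s : ℝ` and `t > 0`, `(Ld Ehat)(s,t) = Ehat s t / (2t)`. -/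
theorem stmt_1
    (ε d₀ : ℝ) (hε : 0 < ε) (hd₀ : d₀ ∈ Set.Ioo (0 : ℝ) 1)
    (a : ℝ → ℝ → ℝ) (haC1 : ContDiff ℝ 1 (fun p : ℝ × ℝ => a p.1 p.2))
    (hapos : ∀ s t : ℝ, 0 ≤ t → 0 < a s t)
    (d : ℝ → ℝ) (hdC1 : ContDiff ℝ 1 d)
    (hdODE : ∀ t : ℝ, 0 ≤ t → HasDerivAt d (a (d t) t) t)
    (hd0 : d 0 = d₀) :
    ∀ s t : ℝ, 0 < t →
      Ld ε a d (Ehat ε d) s t = Ehat ε d s t / (2 * t) := by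

  intro s t ht
  have hk : (4 * ε * t) ≠ 0 := by positivity
  set c := d t with hc
  -- spatial derivative of the exponent
  have hu : ∀ x : ℝ, HasDerivAt (fun x => -(x - c) ^ 2 / (4 * ε * t))
      (-(2 * (x - c)) / (4 * ε * t)) x := by
    intro x
    have h1 : HasDerivAt (fun x : ℝ => x - c) 1 x := (hasDerivAt_id x).sub_const c
    have h2 := (h1.pow 2).neg.div_const (4 * ε * t)
    refine h2.congr_deriv ?_
    push_cast; ring
  -- first spatial derivative of Ehat
  have hf : ∀ x : ℝ, HasDerivAt (fun x => Ehat ε d x t)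
      (Real.exp (-(x - c) ^ 2 / (4 * ε * t)) * (-(2 * (x - c)) / (4 * ε * t))) x := by
    intro x
    exact (hu x).exp
  have hderiv1 : (deriv fun x => Ehat ε d x t)
      = fun x => Real.exp (-(x - c) ^ 2 / (4 * ε * t)) * (-(2 * (x - c)) / (4 * ε * t)) := by
    funext x; exact (hf x).deriv
  -- second spatial derivative
  have hf2 : HasDerivAt (fun x => Real.exp (-(x - c) ^ 2 / (4 * ε * t)) * (-(2 * (x - c)) / (4 * ε * t)))
      (Real.exp (-(s - c) ^ 2 / (4 * ε * t)) * (-(2 * (s - c)) / (4 * ε * t)) * (-(2 * (s - c)) / (4 * ε * t))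
        + Real.exp (-(s - c) ^ 2 / (4 * ε * t)) * (-2 / (4 * ε * t))) s := by
    have h1 : HasDerivAt (fun x : ℝ => -(2 * (x - c)) / (4 * ε * t)) (-2 / (4 * ε * t)) s := by
      have := (((hasDerivAt_id s).sub_const c).const_mul 2).neg.div_const (4 * ε * t)
      refine this.congr_deriv ?_; ring
    exact ((hu s).exp.mul h1)
  have hiter : iteratedDeriv 2 (fun x => Ehat ε d x t) s
      = Real.exp (-(s - c) ^ 2 / (4 * ε * t)) * (-(2 * (s - c)) / (4 * ε * t)) * (-(2 * (s - c)) / (4 * ε * t))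
        + Real.exp (-(s - c) ^ 2 / (4 * ε * t)) * (-2 / (4 * ε * t)) := by
    rw [iteratedDeriv_succ, iteratedDeriv_one, hderiv1]
    exact hf2.deriv
  -- time derivative
  have hd' : HasDerivAt d (a c t) t := hdODE t ht.le
  have hn : HasDerivAt (fun τ => -(s - d τ) ^ 2) (2 * (s - c) * a c t) t := by
    have h1 : HasDerivAt (fun τ => s - d τ) (-(a c t)) t := by
      exact ((hasDerivAt_const t s).sub hd').congr_deriv (by simp)
    have := (h1.pow 2).neg
    refine this.congr_deriv ?_; push_cast; ring
  have hm : HasDerivAt (fun τ : ℝ => 4 * ε * τ) (4 * ε) t := by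
    simpa using (hasDerivAt_id t).const_mul (4 * ε)
  have hq : HasDerivAt (fun τ => -(s - d τ) ^ 2 / (4 * ε * τ))
      ((2 * (s - c) * a c t * (4 * ε * t) - -(s - c) ^ 2 * (4 * ε)) / (4 * ε * t) ^ 2) t :=
    hn.div hm hk
  have hg : HasDerivAt (fun τ => Ehat ε d s τ)
      (Real.exp (-(s - c) ^ 2 / (4 * ε * t)) *
        ((2 * (s - c) * a c t * (4 * ε * t) - -(s - c) ^ 2 * (4 * ε)) / (4 * ε * t) ^ 2)) t :=
    hq.exp
  -- put it together
  have hE : Ehat ε d s t = Real.exp (-(s - c) ^ 2 / (4 * ε * t)) := rfl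
  rw [Ld, hiter, hderiv1, hg.deriv, hE]
  have hεne : ε ≠ 0 := ne_of_gt hε
  have htne : t ≠ 0 := ne_of_gt ht
  field_simp
  ring
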